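/- Let H be a pseudoexpander with m = |Roots(H)|. For any pseudoedge {t_i,t_j} of H, the probability in the probability space on SAT(H) that a random satisfying assignment respects {t_i,t_j} satisfies Pr(X_{i,j} = 1) ≥ (3/128)·m^(−4/4.9). -/

import Mathlib

open scoped Classical

namespace NBPPaper

/-! ### Literals and assignments.
A literal is a pair `(x, b)` of a variable and a polarity (`true` = positive literal).
A set of literals is a `Finset (Var × Bool)`. -/

/-- A set of literals is consistent: no variable occurs both positively and negatively. -/
def Consistent {Var : Type} (S : Finset (Var × Bool)) : Prop :=
  ∀ x : Var, ¬((x, true) ∈ S ∧ (x, false) ∈ S)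

/-- `S` is a set of literals over the variable set `W`. -/
def LitsOver {Var : Type} (W : Finset Var) (S : Finset (Var × Bool)) : Prop :=
  Consistent S ∧ ∀ l ∈ S, l.1 ∈ W

/-- `S` is an assignment of exactly the variables of `W`:
it contains exactly one literal of each variable of `W` and nothing else. -/
def AssignsExactly {Var : Type} (W : Finset Var) (S : Finset (Var × Bool)) : Prop :=
  (∀ l ∈ S, l.1 ∈ W) ∧ ∀ x ∈ W, ∃! b : Bool, (x, b) ∈ S

/-- Satisfaction of a CNF, given as a set of clauses (each clause a set of literals):
every clause contains a literal of `S`. -/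
def SatCNF {V : Type} (φ : Set (Finset (V × Bool))) (S : Finset (V × Bool)) : Prop :=
  ∀ C ∈ φ, ∃ l ∈ C, l ∈ S

/-! ### Nondeterministic branching programs -/

/-- An edge of a nondeterministic branching program over variable type `Var`
with vertex set `Fin n`.  `lab = none` means the edge is unlabelled; the field
`id` allows parallel edges (multigraph). -/
structure NBPEdge (Var : Type) (n : ℕ) where
  src : Fin n
  dst : Fin n
  lab : Option (Var × Bool)
  id : ℕ
deriving DecidableEq

/-- A nondeterministic branching program: a finite DAG (the vertices `Fin n` are
listed in a topological order, i.e. every edge increases the index) with a single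
source (the only vertex with no incoming edge) and a single sink (the only vertex
with no outgoing edge). -/
structure NBP (Var : Type) where
  n : ℕ
  edges : Finset (NBPEdge Var n)
  source : Fin n
  sink : Fin n
  acyc : ∀ e ∈ edges, e.src < e.dst
  source_no_in : ∀ e ∈ edges, e.dst ≠ source
  sink_no_out : ∀ e ∈ edges, e.src ≠ sink
  only_source : ∀ v : Fin n, v ≠ source → ∃ e ∈ edges, e.dst = v
  only_sink : ∀ v : Fin n, v ≠ sink → ∃ e ∈ edges, e.src = v

variable {Var : Type}

/-- The set of literals labelling the edges of a path (a list of edges). -/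
def pathLits [DecidableEq Var] {n : ℕ} (p : List (NBPEdge Var n)) : Finset (Var × Bool) :=
  (p.filterMap NBPEdge.lab).toFinset

/-- The set of variables occurring (as edge labels) on a path. -/
def pathVars [DecidableEq Var] {n : ℕ} (p : List (NBPEdge Var n)) : Finset Var :=
  ((p.filterMap NBPEdge.lab).map Prod.fst).toFinset

/-- The set of vertices visited by a path. -/
def pathVertices {n : ℕ} (p : List (NBPEdge Var n)) : Finset (Fin n) :=
  (p.map NBPEdge.src).toFinset ∪ (p.map NBPEdge.dst).toFinset

/-- The number of occurrences of the variable `x` as an edge label on the path `p`. -/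
def occCount [DecidableEq Var] {n : ℕ} (x : Var) (p : List (NBPEdge Var n)) : ℕ :=
  (p.filterMap NBPEdge.lab).countP (fun l => decide (l.1 = x))

namespace NBP

/-- `p` is a directed path of `Z` from vertex `u` to vertex `v`. -/
def IsPathFrom (Z : NBP Var) (u v : Fin Z.n) (p : List (NBPEdge Var Z.n)) : Prop :=
  p ≠ [] ∧ (∀ e ∈ p, e ∈ Z.edges) ∧ List.Chain' (fun e f => e.dst = f.src) p ∧
    p.head?.map NBPEdge.src = some u ∧ p.getLast?.map NBPEdge.dst = some v

/-- `p` is a source-sink path of `Z`. -/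
def IsSourceSink (Z : NBP Var) (p : List (NBPEdge Var Z.n)) : Prop :=
  Z.IsPathFrom Z.source Z.sink p

/-- A computational path: a source-sink path carrying no two opposite literals. -/
def IsCompPath [DecidableEq Var] (Z : NBP Var) (p : List (NBPEdge Var Z.n)) : Prop :=
  Z.IsSourceSink p ∧ Consistent (pathLits p)

/-- The set `Vars(Z)` of variables whose literals occur on edges of `Z`. -/
def vars [DecidableEq Var] (Z : NBP Var) : Finset Var :=
  Z.edges.biUnion (fun e => (e.lab.map Prod.fst).toFinset)

/-- `Z` is a (syntactic) read-`d`-times NBP. -/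
def ReadTimes [DecidableEq Var] (Z : NBP Var) (d : ℕ) : Prop :=
  ∀ p, Z.IsSourceSink p → ∀ x : Var, occCount x p ≤ d

/-- `Z` is a uniform read-`d`-times NBP: every variable of `Z` occurs exactly `d`
times on every source-sink path. -/
def UniformReadTimes [DecidableEq Var] (Z : NBP Var) (d : ℕ) : Prop :=
  Z.ReadTimes d ∧ ∀ p, Z.IsSourceSink p → ∀ x ∈ Z.vars, occCount x p = d

/-- `Z` computes the Boolean function with variable set `W` whose satisfying
(total) assignments are described by the predicate `F`. -/
def Computes [DecidableEq Var] (Z : NBP Var) (W : Finset Var)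
    (F : Finset (Var × Bool) → Prop) : Prop :=
  Z.vars = W ∧ ∀ S, AssignsExactly W S → (F S ↔ ∃ p, Z.IsCompPath p ∧ pathLits p ⊆ S)

end NBP

/-- `parts` is the partition of the path `p` generated by the vertex set `X`:
`p` is cut into `|X| + 1` consecutive nonempty subpaths whose cut points are
exactly the vertices of `X`. -/
def GeneratesPartition {n : ℕ} (X : Finset (Fin n)) (p : List (NBPEdge Var n))
    (parts : List (List (NBPEdge Var n))) : Prop :=
  p = parts.flatten ∧ parts.length = X.card + 1 ∧ (∀ q ∈ parts, q ≠ []) ∧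
    (parts.dropLast.filterMap (fun q => q.getLast?.map NBPEdge.dst)).toFinset = X

/-- Variables of `Y₁` occur only on parts with even (0-based) index, i.e. odd-numbered
subpaths, and variables of `Y₂` only on parts with odd (0-based) index. -/
def OddEvenSplit [DecidableEq Var] {n : ℕ} (parts : List (List (NBPEdge Var n)))
    (Y₁ Y₂ : Finset Var) : Prop :=
  ∀ k : ℕ, ∀ x ∈ pathVars (parts.getD k []),
    (x ∈ Y₁ → k % 2 = 0) ∧ (x ∈ Y₂ → k % 2 = 1)

/-- The set `X` of vertices of `Z` (containing neither source nor sink) separates the two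
disjoint subsets `Y₁, Y₂` of `Vars(Z)`. -/
def NBP.Separates [DecidableEq Var] (Z : NBP Var) (X : Finset (Fin Z.n))
    (Y₁ Y₂ : Finset Var) : Prop :=
  Disjoint Y₁ Y₂ ∧ Y₁ ⊆ Z.vars ∧ Y₂ ⊆ Z.vars ∧ Z.source ∉ X ∧ Z.sink ∉ X ∧
  ∃ p parts, Z.IsCompPath p ∧ GeneratesPartition X p parts ∧
    (OddEvenSplit parts Y₁ Y₂ ∨ OddEvenSplit parts Y₂ Y₁)

/-! ### Rooted trees -/

/-- A finite rooted tree on (a subset of) the vertex type `V`, given by a parent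
function together with a depth function certifying acyclicity. -/
structure RootedTree (V : Type) [DecidableEq V] where
  verts : Finset V
  root : V
  parent : V → V
  depth : V → ℕ
  root_mem : root ∈ verts
  parent_mem : ∀ v ∈ verts, v ≠ root → parent v ∈ verts
  depth_root : depth root = 0
  depth_parent : ∀ v ∈ verts, v ≠ root → depth v = depth (parent v) + 1

namespace RootedTree

variable {V : Type} [DecidableEq V]

/-- The children of a vertex. -/
def children (T : RootedTree V) (u : V) : Finset V :=
  T.verts.filter (fun v => v ≠ T.root ∧ T.parent v = u)

/-- The leaves of the tree: vertices with no children. -/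
def leaves (T : RootedTree V) : Finset V :=
  T.verts.filter (fun v => T.children v = ∅)

/-- The vertex set of the path from the root to `v` (i.e. `v` and all its ancestors). -/
def pathVerts (T : RootedTree V) (v : V) : Finset V :=
  (Finset.range (T.depth v + 1)).image (fun k => T.parent^[k] v)

/-- The height of the tree: the largest number of vertices on a root-leaf path. -/
def height (T : RootedTree V) : ℕ :=
  (T.verts.sup T.depth) + 1

/-- Every vertex has at most two children. -/
def IsBinary (T : RootedTree V) : Prop :=
  ∀ u ∈ T.verts, (T.children u).card ≤ 2

/-- The tree is extended: none of its leaves has a sibling. -/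
def IsExtended (T : RootedTree V) : Prop :=
  ∀ v ∈ T.verts, v ≠ T.root → T.children v = ∅ → T.children (T.parent v) = {v}

/-- The edge set of the tree (as unordered pairs). -/
def edgeSet (T : RootedTree V) : Finset (Sym2 V) :=
  (T.verts.filter (fun v => v ≠ T.root)).image (fun v => s(v, T.parent v))

end RootedTree

/-! ### Binary-tree-based graphs and pseudoexpanders -/

/-- A binary-tree-based (BTB) graph on the vertex type `V`: an edge-disjoint union of
`m` extended binary rooted trees such that every leaf of one of the trees is a leaf of
exactly two of the trees, any two trees have at most one vertex in common (that vertex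
being a leaf of both), and the roots are pairwise distinct. -/
structure BTB (V : Type) [DecidableEq V] [Fintype V] where
  m : ℕ
  tree : Fin m → RootedTree V
  binary : ∀ i, (tree i).IsBinary
  extended : ∀ i, (tree i).IsExtended
  cover : ∀ v : V, ∃ i, v ∈ (tree i).verts
  edge_disjoint : ∀ i j, i ≠ j → Disjoint ((tree i).edgeSet) ((tree j).edgeSet)
  leaf_two : ∀ i, ∀ v ∈ (tree i).leaves,
    (Finset.univ.filter (fun j => v ∈ (tree j).leaves)).card = 2
  common_le_one : ∀ i j, i ≠ j → ∀ u v,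
    u ∈ (tree i).verts → u ∈ (tree j).verts →
    v ∈ (tree i).verts → v ∈ (tree j).verts → u = v
  common_leaf : ∀ i j, i ≠ j → ∀ v, v ∈ (tree i).verts → v ∈ (tree j).verts →
    v ∈ (tree i).leaves ∧ v ∈ (tree j).leaves
  roots_inj : Function.Injective (fun i => (tree i).root)

namespace BTB

variable {V : Type} [DecidableEq V] [Fintype V]

/-- `ℓ` is the common leaf of the (adjacent) trees `T_i` and `T_j`. -/
def IsCommonLeaf (H : BTB V) (i j : Fin H.m) (ℓ : V) : Prop :=
  i ≠ j ∧ ℓ ∈ (H.tree i).leaves ∧ ℓ ∈ (H.tree j).leaves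

/-- The trees `T_i` and `T_j` are adjacent (share a common leaf); equivalently,
`{t_i, t_j}` is a pseudoedge of `H`. -/
def Adjacent (H : BTB V) (i j : Fin H.m) : Prop :=
  ∃ ℓ, H.IsCommonLeaf i j ℓ

/-- The pseudodegree of the root `t_i`: the number of pseudoedges containing it. -/
noncomputable def pseudodegree (H : BTB V) (i : Fin H.m) : ℕ :=
  (Finset.univ.filter (fun j => H.Adjacent i j)).card

/-- The set of root vertices of `H`. -/
def rootSet (H : BTB V) : Finset V :=
  Finset.univ.image (fun i => (H.tree i).root)

/-- A pseudomatching: a set of pseudoedges (recorded as ordered pairs of root indices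
with `i < j`) no two of which share an end. -/
def IsPseudomatching (H : BTB V) (M : Finset (Fin H.m × Fin H.m)) : Prop :=
  (∀ e ∈ M, e.1 < e.2 ∧ H.Adjacent e.1 e.2) ∧
  ∀ e ∈ M, ∀ f ∈ M, e ≠ f → e.1 ≠ f.1 ∧ e.1 ≠ f.2 ∧ e.2 ≠ f.1 ∧ e.2 ≠ f.2

/-- A pseudomatching between the disjoint sets `U` and `W` of roots (given by their
indices): every pseudoedge of `M` has one end in `U` and the other in `W`. -/
def IsPseudomatchingBetween (H : BTB V) (M : Finset (Fin H.m × Fin H.m))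
    (U W : Finset (Fin H.m)) : Prop :=
  H.IsPseudomatching M ∧ ∀ e ∈ M, (e.1 ∈ U ∧ e.2 ∈ W) ∨ (e.1 ∈ W ∧ e.2 ∈ U)

/-- The set `⋃M` of root vertices matched by the pseudomatching `M`. -/
def matchingRoots (H : BTB V) (M : Finset (Fin H.m × Fin H.m)) : Finset V :=
  M.biUnion (fun e => {(H.tree e.1).root, (H.tree e.2).root})

/-- The vertex set `V(P_{i,j})` of the path connecting the roots `t_i` and `t_j`
through their common leaf `ℓ`. -/
def clauseVerts (H : BTB V) (i j : Fin H.m) (ℓ : V) : Finset V :=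
  (H.tree i).pathVerts ℓ ∪ (H.tree j).pathVerts ℓ

/-- `S` satisfies the monotone CNF `φ_H`. -/
def SatisfiesPhi (H : BTB V) (S : Finset (V × Bool)) : Prop :=
  ∀ i j ℓ, H.IsCommonLeaf i j ℓ → ∃ v ∈ H.clauseVerts i j ℓ, (v, true) ∈ S

/-- `S` falsifies no clause of `φ_H`. -/
def FalsifiesNoClause (H : BTB V) (S : Finset (V × Bool)) : Prop :=
  ∀ i j ℓ, H.IsCommonLeaf i j ℓ → ¬(∀ v ∈ H.clauseVerts i j ℓ, (v, false) ∈ S)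

/-- `H` is a pseudoexpander. -/
def IsPseudoexpander (H : BTB V) : Prop :=
  (∀ i, ((H.tree i).height : ℝ) ≤ Real.logb 2 H.m / 4.9 + 3) ∧
  ∀ U W : Finset (Fin H.m), Disjoint U W →
    (H.m : ℝ) ^ (0.999 : ℝ) ≤ U.card → (H.m : ℝ) ^ (0.999 : ℝ) ≤ W.card →
    ∃ M, H.IsPseudomatchingBetween M U W ∧ (H.m : ℝ) ^ (0.999 : ℝ) / 3 ≤ M.card

/-! #### The probability space on the satisfying assignments of `φ_H` -/

/-- The set `SAT(H)` of satisfying assignments of `φ_H` (total assignments of the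
variables `V(H)` satisfying every clause). -/
noncomputable def SATH (H : BTB V) : Finset (Finset (V × Bool)) :=
  Finset.univ.filter (fun S => AssignsExactly Finset.univ S ∧ H.SatisfiesPhi S)

/-- `Fix(S)`: the set of leaf variables `ℓ_{i,j}` occurring positively in `S` such that
all the other variables of the clause `C_{i,j}` occur negatively in `S`. -/
def Fix (H : BTB V) (S : Finset (V × Bool)) : Set V :=
  {ℓ | ∃ i j, H.IsCommonLeaf i j ℓ ∧ (ℓ, true) ∈ S ∧
      ∀ v ∈ H.clauseVerts i j ℓ, v ≠ ℓ → (v, false) ∈ S}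

/-- The probability weight of `S`: `(1/2) ^ |V(H) \ Fix(S)|`. -/
noncomputable def weight (H : BTB V) (S : Finset (V × Bool)) : ℝ :=
  (1 / 2 : ℝ) ^ (Fintype.card V - (H.Fix S).ncard)

/-- The probability of the event `E` in the probability space on `SAT(H)`. -/
noncomputable def Pr (H : BTB V) (E : Finset (V × Bool) → Prop) : ℝ :=
  ∑ S ∈ H.SATH.filter E, H.weight S

/-- `|S \ Fix(S)|`: the number of literals of `S` that are not fixed. -/
noncomputable def nonFixedCount (H : BTB V) (S : Finset (V × Bool)) : ℕ :=
  (S.filter (fun l => ¬(l.2 = true ∧ l.1 ∈ H.Fix S))).card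

/-- `v` and `w` are siblings (in one of the trees of `H`). -/
def Sibling (H : BTB V) (v w : V) : Prop :=
  ∃ k, v ∈ (H.tree k).verts ∧ w ∈ (H.tree k).verts ∧
    v ≠ (H.tree k).root ∧ w ≠ (H.tree k).root ∧ v ≠ w ∧
    (H.tree k).parent v = (H.tree k).parent w

/-- `S` respects the pseudoedge `{t_i, t_j}`: all non-root variables of `C_{i,j}` occur
negatively in `S` and the siblings of all internal variables of `C_{i,j}` occur
positively in `S`. -/
def Respects (H : BTB V) (i j : Fin H.m) (S : Finset (V × Bool)) : Prop :=
  ∃ ℓ, H.IsCommonLeaf i j ℓ ∧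
    (∀ v ∈ H.clauseVerts i j ℓ,
      v ≠ (H.tree i).root → v ≠ (H.tree j).root → (v, false) ∈ S) ∧
    (∀ v ∈ H.clauseVerts i j ℓ,
      v ≠ (H.tree i).root → v ≠ (H.tree j).root → v ≠ ℓ →
      ∀ w, H.Sibling v w → (w, true) ∈ S)

/-- `S` is `η`-comfortable w.r.t. the pseudomatching `M`: `S` falsifies no clause of
`φ_H` and respects at least `η·|M|` pseudoedges of `M`. -/
noncomputable def Comfortable (H : BTB V) (M : Finset (Fin H.m × Fin H.m)) (η : ℝ)
    (S : Finset (V × Bool)) : Prop :=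
  H.FalsifiesNoClause S ∧
    η * M.card ≤ ((M.filter (fun e => H.Respects e.1 e.2 S)).card : ℝ)

/-- `S` is a guarded set of literals. -/
def Guarded (H : BTB V) (S : Finset (V × Bool)) : Prop :=
  Consistent S ∧ ∀ i j ℓ, H.IsCommonLeaf i j ℓ →
    ((ℓ, true) ∉ S ∧ (ℓ, false) ∉ S) ∨
    (∃ v ∈ H.clauseVerts i j ℓ, v ≠ ℓ ∧ (v, true) ∈ S) ∨
    ((ℓ, true) ∈ S ∧ ∀ v ∈ H.clauseVerts i j ℓ, v ≠ ℓ → (v, false) ∈ S)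

/-! #### Matching CNFs and matching OR-CNFs -/

/-- The 'half clause' `C^{1/2}_{i,j}`: the positive clause on the vertices of the path
from `t_i` (if `side = true`) or from `t_j` (if `side = false`) to the common leaf `ℓ`. -/
def halfClause (H : BTB V) (i j : Fin H.m) (ℓ : V) (side : Bool) : Finset (V × Bool) :=
  (if side then (H.tree i).pathVerts ℓ else (H.tree j).pathVerts ℓ).image (fun v => (v, true))

/-- The matching CNF w.r.t. `M` determined by the side choice `c`: one half clause per
pseudoedge of `M`.  The formulas of `CNF(M)` are exactly the CNFs `matchingCNF H M c`. -/
def matchingCNF (H : BTB V) (M : Finset (Fin H.m × Fin H.m))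
    (c : Fin H.m × Fin H.m → Bool) : Set (Finset (V × Bool)) :=
  {C | ∃ e ∈ M, ∃ ℓ, H.IsCommonLeaf e.1 e.2 ℓ ∧ C = H.halfClause e.1 e.2 ℓ (c e)}

/-- A matching OR-CNF w.r.t. `M` is determined by a map `Ψ` assigning to each assignment
`S₀` of the variables `V(H) \ ⋃M` a matching CNF (given by its side choice `Ψ S₀`);
the formula is `⋁_{S₀} (Conj(S₀) ∧ matchingCNF H M (Ψ S₀))`.  `S` satisfies it iff for
(the) `S₀ ⊆ S`, `S` satisfies the corresponding matching CNF. -/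
def SatORCNF (H : BTB V) (M : Finset (Fin H.m × Fin H.m))
    (Ψ : Finset (V × Bool) → (Fin H.m × Fin H.m) → Bool) (S : Finset (V × Bool)) : Prop :=
  ∃ S₀, AssignsExactly (Finset.univ \ H.matchingRoots M) S₀ ∧ S₀ ⊆ S ∧
    SatCNF (H.matchingCNF M (Ψ S₀)) S

/-- `X` is an `(a, b)`-determining set for the NBP `Z` computing `φ_H`. -/
def IsDeterminingSet (H : BTB V) (Z : NBP V) (a b : ℝ) (X : Finset (Fin Z.n)) : Prop :=
  (X.card : ℝ) ≤ a ∧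
  ∃ M : Finset (Fin H.m × Fin H.m), H.IsPseudomatching M ∧ b ≤ (M.card : ℝ) ∧
    ∃ Ψ : Finset (V × Bool) → (Fin H.m × Fin H.m) → Bool,
      ∀ p, Z.IsCompPath p → X ⊆ pathVertices p → H.SatORCNF M Ψ (pathLits p)

end BTB

/-! ### Auxiliary lemmas for Statement 8 -/

section Statement8Aux

variable {V : Type} [DecidableEq V]

namespace RootedTree

lemma aux_iter (T : RootedTree V) {v : V} (hv : v ∈ T.verts) :
    ∀ k, k ≤ T.depth v → T.parent^[k] v ∈ T.verts ∧ T.depth (T.parent^[k] v) + k = T.depth v := by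
  intro k
  induction k with
  | zero => intro _; simpa using hv
  | succ k ih =>
    intro hk
    obtain ⟨hm, hd⟩ := ih (Nat.le_of_succ_le hk)
    have hroot : T.parent^[k] v ≠ T.root := by
      intro h
      rw [h, T.depth_root] at hd
      omega
    have hm' := T.parent_mem _ hm hroot
    have hd' := T.depth_parent _ hm hroot
    rw [Function.iterate_succ_apply']
    exact ⟨hm', by omega⟩

lemma aux_depth_zero (T : RootedTree V) {v : V} (hv : v ∈ T.verts) (h : T.depth v = 0) :
    v = T.root := by
  by_contra hne
  have := T.depth_parent v hv hne
  omega

lemma aux_mem_pathVerts {T : RootedTree V} {v u : V} :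
    u ∈ T.pathVerts v ↔ ∃ k, k ≤ T.depth v ∧ T.parent^[k] v = u := by
  simp [RootedTree.pathVerts, Finset.mem_image, Nat.lt_succ_iff]

lemma aux_self_mem_pathVerts (T : RootedTree V) (v : V) : v ∈ T.pathVerts v :=
  aux_mem_pathVerts.mpr ⟨0, Nat.zero_le _, rfl⟩

lemma aux_root_mem_pathVerts (T : RootedTree V) {v : V} (hv : v ∈ T.verts) :
    T.root ∈ T.pathVerts v := by
  obtain ⟨hm, hd⟩ := aux_iter T hv (T.depth v) le_rfl
  have h0 : T.depth (T.parent^[T.depth v] v) = 0 := by omega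
  exact aux_mem_pathVerts.mpr ⟨T.depth v, le_rfl, aux_depth_zero T hm h0⟩

lemma aux_pathVerts_card (T : RootedTree V) (v : V) : (T.pathVerts v).card ≤ T.depth v + 1 :=
  le_trans Finset.card_image_le (by rw [Finset.card_range])

lemma aux_pathVerts_root (T : RootedTree V) : T.pathVerts T.root = {T.root} := by
  simp [RootedTree.pathVerts, T.depth_root]

lemma aux_child_mem (T : RootedTree V) {v : V} (hv : v ∈ T.verts) (hr : v ≠ T.root) :
    v ∈ T.children (T.parent v) :=
  Finset.mem_filter.mpr ⟨hv, hr, rfl⟩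

lemma aux_not_leaf (T : RootedTree V) {v u : V} (hv : v ∈ T.verts) (hu : u ∈ T.pathVerts v)
    (hne : u ≠ v) : u ∈ T.verts ∧ u ∉ T.leaves := by
  obtain ⟨k, hk, hku⟩ := aux_mem_pathVerts.mp hu
  match k, hk, hku with
  | 0, _, h => exact absurd (by simpa using h.symm) hne
  | k+1, hk, hku =>
    obtain ⟨hm, hd⟩ := aux_iter T hv (k+1) hk
    obtain ⟨hcm, hcd⟩ := aux_iter T hv k (Nat.le_of_succ_le hk)
    have hcroot : T.parent^[k] v ≠ T.root := by
      intro h; rw [h, T.depth_root] at hcd; omega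
    have hchild : T.parent^[k] v ∈ T.children u := by
      rw [← hku, Function.iterate_succ_apply']
      exact aux_child_mem T hcm hcroot
    refine ⟨hku ▸ hm, ?_⟩
    intro hl
    have hemp := (Finset.mem_filter.mp hl).2
    rw [hemp] at hchild
    exact absurd hchild (Finset.notMem_empty _)

lemma aux_path_parent_inj (T : RootedTree V) {ℓ v w : V} (hℓ : ℓ ∈ T.verts)
    (hv : v ∈ T.pathVerts ℓ) (hw : w ∈ T.pathVerts ℓ) (hvr : v ≠ T.root) (hwr : w ≠ T.root)
    (hp : T.parent v = T.parent w) : v = w := by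
  obtain ⟨s, hs, hsv⟩ := aux_mem_pathVerts.mp hv
  obtain ⟨t, ht, htw⟩ := aux_mem_pathVerts.mp hw
  obtain ⟨hvm, hvd⟩ := aux_iter T hℓ s hs
  obtain ⟨hwm, hwd⟩ := aux_iter T hℓ t ht
  have hvd0 : T.depth (T.parent^[s] ℓ) ≠ 0 := fun h => hvr (hsv ▸ aux_depth_zero T hvm h)
  have hwd0 : T.depth (T.parent^[t] ℓ) ≠ 0 := fun h => hwr (htw ▸ aux_depth_zero T hwm h)
  have hs1 : s + 1 ≤ T.depth ℓ := by omega
  have ht1 : t + 1 ≤ T.depth ℓ := by omega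
  obtain ⟨_, hd1⟩ := aux_iter T hℓ (s+1) hs1
  obtain ⟨_, hd2⟩ := aux_iter T hℓ (t+1) ht1
  have he : T.parent^[s+1] ℓ = T.parent^[t+1] ℓ := by
    rw [Function.iterate_succ_apply', Function.iterate_succ_apply', hsv, htw, hp]
  rw [he] at hd1
  have hst : s = t := by omega
  rw [← hsv, ← htw, hst]

end RootedTree

end Statement8Aux
section Statement8Aux2

variable {V : Type} [DecidableEq V] [Fintype V]

/-- The set of literals of a total assignment `f`. -/
def lits (f : V → Bool) : Finset (V × Bool) := Finset.univ.image (fun v => (v, f v))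

lemma mem_lits {f : V → Bool} {v : V} {b : Bool} : (v, b) ∈ lits f ↔ f v = b := by
  constructor
  · intro h
    obtain ⟨a, _, ha⟩ := Finset.mem_image.mp h
    obtain ⟨h1, h2⟩ := Prod.mk.injEq .. ▸ ha
    exact h1 ▸ h2
  · intro h
    exact Finset.mem_image.mpr ⟨v, Finset.mem_univ v, by rw [h]⟩

lemma assignsExactly_lits (f : V → Bool) : AssignsExactly Finset.univ (lits f) := by
  refine ⟨fun l _ => Finset.mem_univ _, fun x _ => ⟨f x, mem_lits.mpr rfl, ?_⟩⟩
  intro b hb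
  exact (mem_lits.mp hb).symm

namespace BTB

/-- Repair map: flip a leaf to true when its clause is totally falsified. -/
noncomputable def flipA (H : BTB V) (f : V → Bool) : V → Bool := fun v =>
  if (f v = false ∧ ∃ a b, H.IsCommonLeaf a b v ∧ ∀ u ∈ H.clauseVerts a b v, f u = false)
  then true else f v

variable (H : BTB V)

lemma flipA_true {f : V → Bool} {v : V} (h : f v = true) : H.flipA f v = true := by
  unfold flipA
  split_ifs with h'
  · rfl
  · exact h

lemma flipA_of_not_leaf {f : V → Bool} {v : V} (h : ¬∃ a b, H.IsCommonLeaf a b v) :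
    H.flipA f v = f v := by
  unfold flipA
  rw [if_neg]
  rintro ⟨-, a, b, hab, -⟩
  exact h ⟨a, b, hab⟩

lemma flipA_anatomy {f : V → Bool} {v : V} (h : H.flipA f v ≠ f v) :
    f v = false ∧ H.flipA f v = true ∧
      ∃ a b, H.IsCommonLeaf a b v ∧ ∀ u ∈ H.clauseVerts a b v, f u = false := by
  revert h
  unfold flipA
  split_ifs with h'
  · intro _
    exact ⟨h'.1, rfl, h'.2⟩
  · intro h
    exact absurd rfl h

lemma leaf_mem_verts {a : Fin H.m} {v : V} (h : v ∈ (H.tree a).leaves) :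
    v ∈ (H.tree a).verts := (Finset.mem_filter.mp h).1

lemma trees_eq_of_mem {a b : Fin H.m} {v : V} (hva : v ∈ (H.tree a).verts)
    (hnl : v ∉ (H.tree a).leaves) (hvb : v ∈ (H.tree b).verts) : b = a := by
  by_contra hne
  exact hnl (H.common_leaf a b (fun h => hne h.symm) v hva hvb).1

lemma clauseVerts_structure {i j : Fin H.m} {ℓ v : V} (hcl : H.IsCommonLeaf i j ℓ)
    (hv : v ∈ H.clauseVerts i j ℓ) (hne : v ≠ ℓ) :
    ∃ a, (a = i ∨ a = j) ∧ v ∈ (H.tree a).pathVerts ℓ ∧ v ∈ (H.tree a).verts ∧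
      v ∉ (H.tree a).leaves ∧ ∀ b, b ≠ a → v ∉ (H.tree b).verts := by
  obtain ⟨hij, hli, hlj⟩ := hcl
  rcases Finset.mem_union.mp hv with h | h
  · obtain ⟨hm, hnl⟩ := RootedTree.aux_not_leaf _ (H.leaf_mem_verts hli) h hne
    exact ⟨i, Or.inl rfl, h, hm, hnl, fun b hb hvb => hb (H.trees_eq_of_mem hm hnl hvb)⟩
  · obtain ⟨hm, hnl⟩ := RootedTree.aux_not_leaf _ (H.leaf_mem_verts hlj) h hne
    exact ⟨j, Or.inr rfl, h, hm, hnl, fun b hb hvb => hb (H.trees_eq_of_mem hm hnl hvb)⟩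

lemma clauseVerts_not_commonLeaf {i j : Fin H.m} {ℓ v : V} (hcl : H.IsCommonLeaf i j ℓ)
    (hv : v ∈ H.clauseVerts i j ℓ) (hne : v ≠ ℓ) : ¬∃ c d, H.IsCommonLeaf c d v := by
  obtain ⟨a, -, -, hin, hnl, huniq⟩ := H.clauseVerts_structure hcl hv hne
  rintro ⟨c, d, hcd, hc, hd⟩
  by_cases hca : c = a
  · exact hnl (hca ▸ hc)
  · exact huniq c hca (H.leaf_mem_verts hc)

lemma clauseVerts_eq_of_commonLeaf {i j c d : Fin H.m} {ℓ : V} (h1 : H.IsCommonLeaf i j ℓ)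
    (h2 : H.IsCommonLeaf c d ℓ) : H.clauseVerts c d ℓ = H.clauseVerts i j ℓ := by
  have hcard := H.leaf_two i ℓ h1.2.1
  set F := Finset.univ.filter (fun k => ℓ ∈ (H.tree k).leaves) with hF
  have hmemF : ∀ k : Fin H.m, ℓ ∈ (H.tree k).leaves → k ∈ F := fun k hk =>
    Finset.mem_filter.mpr ⟨Finset.mem_univ _, hk⟩
  have hsub : ({i, j} : Finset (Fin H.m)) ⊆ F := by
    intro x hx
    rcases Finset.mem_insert.mp hx with h | h
    · exact h ▸ hmemF i h1.2.1
    · exact (Finset.mem_singleton.mp h) ▸ hmemF j h1.2.2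
  have hc2 : ({i, j} : Finset (Fin H.m)).card = 2 := Finset.card_pair h1.1
  have hFeq : ({i, j} : Finset (Fin H.m)) = F :=
    Finset.eq_of_subset_of_card_le hsub (by rw [hcard, hc2])
  have hcF : c ∈ ({i, j} : Finset (Fin H.m)) := hFeq ▸ hmemF c h2.2.1
  have hdF : d ∈ ({i, j} : Finset (Fin H.m)) := hFeq ▸ hmemF d h2.2.2
  rcases Finset.mem_insert.mp hcF with hc | hc <;>
    rcases Finset.mem_insert.mp hdF with hd | hd
  · exact absurd (hc.trans (Finset.mem_singleton.mp (by simpa using hd) ▸ rfl)) h2.1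
  · rw [hc, Finset.mem_singleton.mp hd]
  · rw [Finset.mem_singleton.mp hc, hd]
    unfold clauseVerts
    exact Finset.union_comm _ _
  · exact absurd ((Finset.mem_singleton.mp hc).trans
      (Finset.mem_singleton.mp hd).symm) h2.1

lemma satisfiesPhi_flipA (f : V → Bool) : H.SatisfiesPhi (lits (H.flipA f)) := by
  intro a b ℓ hcl
  by_cases hex : ∃ u ∈ H.clauseVerts a b ℓ, f u = true
  · obtain ⟨u, hu, hfu⟩ := hex
    exact ⟨u, hu, mem_lits.mpr (H.flipA_true hfu)⟩
  · push_neg at hex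
    have hall : ∀ u ∈ H.clauseVerts a b ℓ, f u = false := by
      intro u hu
      simpa using hex u hu
    have hℓmem : ℓ ∈ H.clauseVerts a b ℓ :=
      Finset.mem_union.mpr (Or.inl (RootedTree.aux_self_mem_pathVerts _ ℓ))
    refine ⟨ℓ, hℓmem, mem_lits.mpr ?_⟩
    unfold flipA
    rw [if_pos ⟨hall ℓ hℓmem, a, b, hcl, hall⟩]

lemma flipA_mem_SATH (f : V → Bool) : lits (H.flipA f) ∈ H.SATH := by
  refine Finset.mem_filter.mpr ⟨Finset.mem_univ _, assignsExactly_lits _, H.satisfiesPhi_flipA f⟩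

lemma not_fix_flipA_eq {f : V → Bool} {S : Finset (V × Bool)} {v : V}
    (hS : lits (H.flipA f) = S) (hv : v ∉ H.Fix S) : H.flipA f v = f v := by
  by_contra hne
  obtain ⟨hf0, hft, a, b, hcl, hall⟩ := H.flipA_anatomy hne
  apply hv
  refine ⟨a, b, hcl, by rw [← hS]; exact mem_lits.mpr hft, ?_⟩
  intro u hu hune
  rw [← hS]
  apply mem_lits.mpr
  rw [H.flipA_of_not_leaf (H.clauseVerts_not_commonLeaf hcl hu hune)]
  exact hall u hu

lemma fiber_card_le (S : Finset (V × Bool)) :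
    (Finset.univ.filter (fun f : V → Bool => lits (H.flipA f) = S)).card
      ≤ 2 ^ (H.Fix S).ncard := by
  classical
  have hcard : (Finset.univ : Finset ({x // x ∈ (H.Fix S).toFinset} → Bool)).card
      = 2 ^ (H.Fix S).ncard := by
    rw [Finset.card_univ, Fintype.card_fun, Fintype.card_coe,
      ← Set.ncard_eq_toFinset_card']
    rfl
  rw [← hcard]
  apply Finset.card_le_card_of_injOn (fun f x => f x.1) (fun _ _ => Finset.mem_univ _)
  intro f hf g hg hfg
  simp only [Finset.coe_filter, Set.mem_setOf_eq, Finset.mem_univ, true_and] at hf hg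
  funext v
  by_cases hv : v ∈ H.Fix S
  · exact congrFun hfg ⟨v, Set.mem_toFinset.mpr hv⟩
  · have h1 := H.not_fix_flipA_eq hf hv
    have h2 := H.not_fix_flipA_eq hg hv
    have h3 : H.flipA f v = H.flipA g v := by
      have : (v, H.flipA g v) ∈ lits (H.flipA f) := by
        rw [hf, ← hg]; exact mem_lits.mpr rfl
      exact mem_lits.mp this
    rw [← h1, h3, h2]

end BTB

end Statement8Aux2

/-- for any pseudoedge `{t_i,t_j}` of a pseudoexpander `H`, the
probability that a random satisfying assignment respects `{t_i,t_j}` is at least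
`(3/128)·m^(−4/4.9)`. -/
theorem statement_8 (V : Type) [DecidableEq V] [Fintype V] (H : BTB V)
    (hH : H.IsPseudoexpander) (i j : Fin H.m) (hij : H.Adjacent i j) :
    (3 / 128 : ℝ) * (H.m : ℝ) ^ (-(4 / 4.9) : ℝ) ≤
      H.Pr (fun S => H.Respects i j S) := by
  classical
  obtain ⟨ℓ, hcl⟩ := hij
  have hijne : i ≠ j := hcl.1
  set n := Fintype.card V with hn
  set r1 := (H.tree i).root with hr1
  set r2 := (H.tree j).root with hr2
  have hr12 : r1 ≠ r2 := fun h => hijne (H.roots_inj h)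
  set CV := H.clauseVerts i j ℓ with hCV
  set D0 := CV \ {r1, r2} with hD0
  set Intl := D0.erase ℓ with hIntl
  set Sib := Finset.univ.filter (fun w => ∃ v ∈ Intl, H.Sibling v w) with hSib
  set TT := D0 ∪ Sib ∪ ({r1, r2} : Finset V) with hTT
  have hℓi : ℓ ∈ (H.tree i).verts := H.leaf_mem_verts hcl.2.1
  have hℓj : ℓ ∈ (H.tree j).verts := H.leaf_mem_verts hcl.2.2
  have hℓP1 : ℓ ∈ (H.tree i).pathVerts ℓ := RootedTree.aux_self_mem_pathVerts _ _
  have hℓP2 : ℓ ∈ (H.tree j).pathVerts ℓ := RootedTree.aux_self_mem_pathVerts _ _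
  have hCVu : CV = (H.tree i).pathVerts ℓ ∪ (H.tree j).pathVerts ℓ := by
    rw [hCV]; rfl
  have hℓCV : ℓ ∈ CV := by rw [hCVu]; exact Finset.mem_union.mpr (Or.inl hℓP1)
  have hr1CV : r1 ∈ CV := by
    rw [hCVu]
    exact Finset.mem_union.mpr (Or.inl (RootedTree.aux_root_mem_pathVerts _ hℓi))
  have hr2CV : r2 ∈ CV := by
    rw [hCVu]
    exact Finset.mem_union.mpr (Or.inr (RootedTree.aux_root_mem_pathVerts _ hℓj))
  have hpairCV : ({r1, r2} : Finset V) ⊆ CV := by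
    intro x hx
    rcases Finset.mem_insert.mp hx with h | h
    · exact h ▸ hr1CV
    · exact (Finset.mem_singleton.mp h) ▸ hr2CV
  have hIntlfact : ∀ v ∈ Intl, v ∈ CV ∧ v ≠ ℓ ∧ v ≠ r1 ∧ v ≠ r2 := by
    intro v hv
    have h1 := Finset.mem_of_mem_erase (hIntl ▸ hv)
    have hne := Finset.ne_of_mem_erase (hIntl ▸ hv)
    obtain ⟨hCVm, hnr⟩ := Finset.mem_sdiff.mp (hD0 ▸ h1)
    simp only [Finset.mem_insert, Finset.mem_singleton, not_or] at hnr
    exact ⟨hCVm, hne, hnr.1, hnr.2⟩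
  -- structure of siblings
  have sibcore : ∀ v ∈ Intl, ∀ w, H.Sibling v w →
      ∃ a, (a = i ∨ a = j) ∧ v ∈ (H.tree a).pathVerts ℓ ∧ v ∈ (H.tree a).verts ∧
        v ∉ (H.tree a).leaves ∧ v ≠ (H.tree a).root ∧
        w ∈ (H.tree a).verts ∧ w ≠ (H.tree a).root ∧ v ≠ w ∧
        (H.tree a).parent v = (H.tree a).parent w ∧ w ∉ (H.tree a).leaves ∧
        (∀ b, b ≠ a → w ∉ (H.tree b).verts) := by
    intro v hv w hsib
    obtain ⟨hvCV, hvℓ, -, -⟩ := hIntlfact v hv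
    obtain ⟨a, haij, hvpath, hvmem, hvnl, hvuniq⟩ := H.clauseVerts_structure hcl hvCV hvℓ
    obtain ⟨k, hvk, hwk, hvroot, hwroot, hvw, hpar⟩ := hsib
    have hka : k = a := H.trees_eq_of_mem hvmem hvnl hvk
    subst hka
    have hwnl : w ∉ (H.tree k).leaves := by
      intro hwl
      have hch := H.extended k w hwk hwroot ((Finset.mem_filter.mp hwl).2)
      have hvch : v ∈ (H.tree k).children ((H.tree k).parent w) := by
        rw [← hpar]
        exact RootedTree.aux_child_mem _ hvk hvroot
      rw [hch] at hvch
      exact hvw (Finset.mem_singleton.mp hvch)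
    exact ⟨k, haij, hvpath, hvmem, hvnl, hvroot, hwk, hwroot, hvw, hpar, hwnl,
      fun b hb hwb => hb (H.trees_eq_of_mem hwk hwnl hwb)⟩
  have sibfact : ∀ w ∈ Sib, w ∉ CV ∧ w ≠ r1 ∧ w ≠ r2 := by
    intro w hw
    obtain ⟨v, hvI, hsib⟩ := (Finset.mem_filter.mp (hSib ▸ hw)).2
    obtain ⟨a, haij, hvpath, hvmem, hvnl, hvroot, hwk, hwroot, hvw, hpar, hwnl, hwuniq⟩ :=
      sibcore v hvI w hsib
    have hℓa : ℓ ∈ (H.tree a).verts := by rcases haij with h | h <;> subst h <;> assumption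
    have hwr1 : w ≠ r1 := by
      intro h
      by_cases hai : a = i
      · exact hwroot (by rw [h, hr1, hai])
      · exact hwuniq i (fun hh => hai hh.symm) (by rw [h, hr1]; exact (H.tree i).root_mem)
    have hwr2 : w ≠ r2 := by
      intro h
      by_cases haj : a = j
      · exact hwroot (by rw [h, hr2, haj])
      · exact hwuniq j (fun hh => haj hh.symm) (by rw [h, hr2]; exact (H.tree j).root_mem)
    have hwCV : w ∉ CV := by
      intro hwCV
      have hwℓ : w ≠ ℓ := by
        intro h
        apply hwnl
        rcases haij with h' | h' <;> subst h' <;> rw [h]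
        · exact hcl.2.1
        · exact hcl.2.2
      obtain ⟨b, hbij, hwpath, hwmem2, hwnl2, hwuniq2⟩ := H.clauseVerts_structure hcl hwCV hwℓ
      have hba : b = a := by
        by_contra hba
        exact hwuniq2 a (fun hh => hba hh.symm) hwk
      subst hba
      exact hvw (RootedTree.aux_path_parent_inj _ hℓa hvpath hwpath hvroot hwroot hpar)
    exact ⟨hwCV, hwr1, hwr2⟩
  have hsible : Sib.card ≤ Intl.card := by
    have hch : ∀ w ∈ Sib, ∃ v, v ∈ Intl ∧ H.Sibling v w := by
      intro w hw
      obtain ⟨v, hv, hs⟩ := (Finset.mem_filter.mp (hSib ▸ hw)).2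
      exact ⟨v, hv, hs⟩
    apply Finset.card_le_card_of_injOn
      (fun w => if h : ∃ v, v ∈ Intl ∧ H.Sibling v w then h.choose else ℓ)
    · intro w hw
      simp only [dif_pos (hch w hw)]
      exact (hch w hw).choose_spec.1
    · intro w1 hw1' w2 hw2' heq
      have hw1 : w1 ∈ Sib := hw1'
      have hw2 : w2 ∈ Sib := hw2'
      simp only at heq
      rw [dif_pos (hch w1 hw1), dif_pos (hch w2 hw2)] at heq
      obtain ⟨hv1I, hs1⟩ := (hch w1 hw1).choose_spec
      obtain ⟨hv2I, hs2⟩ := (hch w2 hw2).choose_spec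
      rw [heq] at hs1
      by_contra hne
      obtain ⟨a, haij, hvpath, hvmem, hvnl, hvroot, hw1k, hw1root, hvw1, hp1, -, -⟩ :=
        sibcore _ hv2I w1 hs1
      obtain ⟨a', haij', hvpath', hvmem', hvnl', hvroot', hw2k, hw2root, hvw2, hp2, -, -⟩ :=
        sibcore _ hv2I w2 hs2
      have ha' : a' = a := H.trees_eq_of_mem hvmem hvnl hvmem'
      rw [ha'] at hp2 hw2k hw2root
      have hpm : (H.tree a).parent ((hch w2 hw2).choose) ∈ (H.tree a).verts :=
        (H.tree a).parent_mem _ hvmem hvroot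
      have hsubset : ({(hch w2 hw2).choose, w1, w2} : Finset V) ⊆
          (H.tree a).children ((H.tree a).parent ((hch w2 hw2).choose)) := by
        intro x hx
        simp only [Finset.mem_insert, Finset.mem_singleton] at hx
        rcases hx with rfl | rfl | rfl
        · exact RootedTree.aux_child_mem _ hvmem hvroot
        · rw [hp1]
          exact RootedTree.aux_child_mem _ hw1k hw1root
        · rw [hp2]
          exact RootedTree.aux_child_mem _ hw2k hw2root
      have hc3 : ({(hch w2 hw2).choose, w1, w2} : Finset V).card = 3 := by
        rw [Finset.card_insert_of_notMem (by simp [hvw1, hvw2]), Finset.card_pair hne]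
      have hle2 := (Finset.card_le_card hsubset).trans (H.binary a _ hpm)
      omega
  -- the good assignments
  set Good : (V → Bool) → Prop := fun f =>
    (∀ v ∈ D0, f v = false) ∧ (∀ w ∈ Sib, f w = true) ∧ (f r1 = true ∨ f r2 = true) with hGood
  set GoodF := Finset.univ.filter Good with hGoodF
  have good_resp : ∀ f, Good f → H.Respects i j (lits (H.flipA f)) := by
    intro f hf
    obtain ⟨hg1, hg2, hg3⟩ := hf
    refine ⟨ℓ, hcl, ?_, ?_⟩
    · intro v hv hv1 hv2
      have hvD0 : v ∈ D0 := by
        rw [hD0]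
        refine Finset.mem_sdiff.mpr ⟨by rw [hCV]; exact hv, ?_⟩
        simp only [Finset.mem_insert, Finset.mem_singleton, not_or]
        exact ⟨by rw [hr1]; exact hv1, by rw [hr2]; exact hv2⟩
      have hfv := hg1 v hvD0
      apply mem_lits.mpr
      by_cases hvℓ : v = ℓ
      · subst hvℓ
        have hflip : H.flipA f v = f v := by
          unfold BTB.flipA
          rw [if_neg]
          rintro ⟨h0, a, b, hab, hall⟩
          have hceq := H.clauseVerts_eq_of_commonLeaf hcl hab
          rcases hg3 with h | h
          · have hx := hall r1 (by rw [hceq, ← hCV]; exact hr1CV)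
            rw [h] at hx
            exact Bool.true_eq_false.mp hx
          · have hx := hall r2 (by rw [hceq, ← hCV]; exact hr2CV)
            rw [h] at hx
            exact Bool.true_eq_false.mp hx
        rw [hflip]
        exact hfv
      · rw [H.flipA_of_not_leaf (H.clauseVerts_not_commonLeaf hcl hv hvℓ)]
        exact hfv
    · intro v hv hv1 hv2 hvℓ w hsib
      have hvI : v ∈ Intl := by
        rw [hIntl]
        refine Finset.mem_erase.mpr ⟨hvℓ, ?_⟩
        rw [hD0]
        refine Finset.mem_sdiff.mpr ⟨by rw [hCV]; exact hv, ?_⟩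
        simp only [Finset.mem_insert, Finset.mem_singleton, not_or]
        exact ⟨by rw [hr1]; exact hv1, by rw [hr2]; exact hv2⟩
      have hwS : w ∈ Sib := by
        rw [hSib]
        exact Finset.mem_filter.mpr ⟨Finset.mem_univ _, v, hvI, hsib⟩
      exact mem_lits.mpr (H.flipA_true (hg2 w hwS))
  rw [BTB.Pr]
  set E' := H.SATH.filter (fun S => H.Respects i j S) with hE'
  have hmapsto : ∀ f ∈ GoodF, lits (H.flipA f) ∈ E' := by
    intro f hf
    rw [hE']
    exact Finset.mem_filter.mpr ⟨H.flipA_mem_SATH f,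
      good_resp f ((Finset.mem_filter.mp (hGoodF ▸ hf)).2)⟩
  have hcards : GoodF.card = ∑ S ∈ E', (GoodF.filter (fun f => lits (H.flipA f) = S)).card :=
    Finset.card_eq_sum_card_fiberwise hmapsto
  have hsum : (GoodF.card : ℝ) ≤ ∑ S ∈ E', (2:ℝ) ^ (H.Fix S).ncard := by
    rw [hcards]
    push_cast
    apply Finset.sum_le_sum
    intro S _
    have h1 : (GoodF.filter (fun f => lits (H.flipA f) = S)).card
        ≤ (Finset.univ.filter (fun f : V → Bool => lits (H.flipA f) = S)).card := by
      apply Finset.card_le_card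
      intro f hf
      exact Finset.mem_filter.mpr ⟨Finset.mem_univ _, (Finset.mem_filter.mp hf).2⟩
    exact_mod_cast h1.trans (H.fiber_card_le S)
  have hweight : ∀ S, H.weight S = (2:ℝ) ^ (H.Fix S).ncard / 2 ^ n := by
    intro S
    have hle : (H.Fix S).ncard ≤ n := by
      have h0 := Set.ncard_le_ncard (Set.subset_univ (H.Fix S)) Set.finite_univ
      rwa [Set.ncard_univ, Nat.card_eq_fintype_card, ← hn] at h0
    rw [BTB.weight, one_div, inv_pow, ← hn, eq_div_iff (by positivity),
      inv_mul_eq_div, div_eq_iff (by positivity), ← pow_add]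
    congr 1
    omega
  -- counting good assignments
  have hr1D0 : r1 ∉ D0 := by rw [hD0]; simp
  have hr2D0 : r2 ∉ D0 := by rw [hD0]; simp
  have hr1Sib : r1 ∉ Sib := fun h => (sibfact r1 h).2.1 rfl
  have hr2Sib : r2 ∉ Sib := fun h => (sibfact r2 h).2.2 rfl
  set Apar : Finset (Bool × Bool) := {(true, true), (true, false), (false, true)} with hApar
  set Afun := Finset.univ.filter (fun g : V → Bool => ∀ v ∈ TT, g v = false) with hAfun
  have hAparcard : Apar.card = 3 := by rw [hApar]; decide
  have hAfuncard : Afun.card = 2 ^ (n - TT.card) := by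
    have hcompl : (TTᶜ : Finset V).card = n - TT.card := by rw [Finset.card_compl, hn]
    rw [← hcompl]
    have huc : (Finset.univ : Finset ({x // x ∈ (TTᶜ : Finset V)} → Bool)).card
        = 2 ^ (TTᶜ : Finset V).card := by
      rw [Finset.card_univ, Fintype.card_fun, Fintype.card_coe]
      rfl
    rw [← huc]
    apply Finset.card_bij' (fun g _ => fun x : {x // x ∈ (TTᶜ : Finset V)} => g x.1)
      (fun h _ => fun v => if hv : v ∈ (TTᶜ : Finset V) then h ⟨v, hv⟩ else false)
    · intro g _
      exact Finset.mem_univ _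
    · intro h _
      rw [hAfun]
      refine Finset.mem_filter.mpr ⟨Finset.mem_univ _, ?_⟩
      intro v hv
      show (if hv' : v ∈ (TTᶜ : Finset V) then h ⟨v, hv'⟩ else false) = false
      rw [dif_neg (by simp [Finset.mem_compl, hv])]
    · intro g hg
      funext v
      show (if hv' : v ∈ (TTᶜ : Finset V) then g (⟨v, hv'⟩ : {x // x ∈ (TTᶜ : Finset V)}).1
        else false) = g v
      by_cases hv : v ∈ (TTᶜ : Finset V)
      · rw [dif_pos hv]
      · rw [dif_neg hv]
        have hvTT : v ∈ TT := by simpa [Finset.mem_compl] using hv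
        rw [hAfun] at hg
        exact ((Finset.mem_filter.mp hg).2 v hvTT).symm
    · intro h _
      funext x
      show (if hv' : (x : V) ∈ (TTᶜ : Finset V) then h ⟨x.1, hv'⟩ else false) = h x
      rw [dif_pos x.2]
  have hinj : Apar.card * Afun.card ≤ GoodF.card := by
    rw [← Finset.card_product]
    apply Finset.card_le_card_of_injOn
      (fun pg : (Bool × Bool) × (V → Bool) => fun v =>
        if v ∈ D0 then false else if v ∈ Sib then true
        else if v = r1 then pg.1.1 else if v = r2 then pg.1.2 else pg.2 v)
    · rintro ⟨p, g⟩ hpg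
      rw [Finset.mem_coe, Finset.mem_product] at hpg
      obtain ⟨hp, hg⟩ := hpg
      rw [Finset.mem_coe, hGoodF]
      refine Finset.mem_filter.mpr ⟨Finset.mem_univ _, ?_, ?_, ?_⟩
      · intro v hv
        simp only [if_pos hv]
      · intro w hw
        have hwD0 : w ∉ D0 := by
          intro h
          exact (sibfact w hw).1 (Finset.mem_sdiff.mp (hD0 ▸ h)).1
        simp only [if_neg hwD0, if_pos hw]
      · have hp' : ¬(p.1 = false ∧ p.2 = false) := by
          obtain ⟨b1, b2⟩ := p
          rw [hApar] at hp
          simp only [Finset.mem_insert, Finset.mem_singleton, Prod.mk.injEq] at hp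
          rcases hp with ⟨h1, h2⟩ | ⟨h1, h2⟩ | ⟨h1, h2⟩ <;> subst h1 <;> subst h2 <;> simp
        by_cases hb : p.1 = true
        · left
          simp only [if_neg hr1D0, if_neg hr1Sib, if_pos rfl]
          exact hb
        · right
          have hb2 : p.2 = true := by
            rcases Bool.eq_false_or_eq_true p.2 with h | h
            · exact h
            · exact absurd ⟨Bool.eq_false_iff.mpr (by simpa using hb), h⟩ hp'
          simp only [if_neg hr2D0, if_neg hr2Sib, if_neg (Ne.symm hr12), if_pos rfl]
          exact hb2
    · rintro ⟨p1, g1⟩ h1' ⟨p2, g2⟩ h2' heq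
      have h1 : (p1, g1) ∈ Apar ×ˢ Afun := h1'
      have h2 : (p2, g2) ∈ Apar ×ˢ Afun := h2'
      rw [Finset.mem_product] at h1 h2
      simp only at heq
      have e1 : p1.1 = p2.1 := by
        have hx := congrFun heq r1
        simpa only [if_neg hr1D0, if_neg hr1Sib, if_pos rfl, ↓reduceIte] using hx
      have e2 : p1.2 = p2.2 := by
        have hx := congrFun heq r2
        simpa only [if_neg hr2D0, if_neg hr2Sib, if_neg (Ne.symm hr12), if_pos rfl, ↓reduceIte] using hx
      have e3 : g1 = g2 := by
        funext v
        by_cases hvTT : v ∈ TT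
        · have hg1m := h1.2
          have hg2m := h2.2
          rw [hAfun] at hg1m hg2m
          show g1 v = g2 v
          have e1' : g1 v = false := (Finset.mem_filter.mp hg1m).2 v hvTT
          have e2' : g2 v = false := (Finset.mem_filter.mp hg2m).2 v hvTT
          rw [e1', e2']
        · have hvD0 : v ∉ D0 := fun h =>
            hvTT (hTT ▸ Finset.mem_union_left _ (Finset.mem_union_left _ h))
          have hvSib : v ∉ Sib := fun h =>
            hvTT (hTT ▸ Finset.mem_union_left _ (Finset.mem_union_right _ h))
          have hvr1 : v ≠ r1 := fun h =>
            hvTT (hTT ▸ Finset.mem_union_right _ (by simp [h]))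
          have hvr2 : v ≠ r2 := fun h =>
            hvTT (hTT ▸ Finset.mem_union_right _ (by simp [h]))
          have hx := congrFun heq v
          simpa only [if_neg hvD0, if_neg hvSib, if_neg hvr1, if_neg hvr2] using hx
      obtain ⟨a1, a2⟩ := p1
      obtain ⟨b1, b2⟩ := p2
      simp only at e1 e2
      rw [e1, e2, e3]
  have hGoodFcard : 3 * 2 ^ (n - TT.card) ≤ GoodF.card := by
    calc 3 * 2 ^ (n - TT.card) = Apar.card * Afun.card := by rw [hAparcard, hAfuncard]
      _ ≤ GoodF.card := hinj
  -- cardinality bounds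
  have hpair2 : ({r1, r2} : Finset V).card = 2 := Finset.card_pair hr12
  have hTTcard : TT.card ≤ D0.card + Sib.card + 2 := by
    rw [hTT]
    refine (Finset.card_union_le _ _).trans ?_
    have h1 := Finset.card_union_le D0 Sib
    omega
  have hD0card : D0.card + 2 = CV.card := by
    have hc : D0.card = CV.card - 2 := by rw [hD0, Finset.card_sdiff_of_subset hpairCV, hpair2]
    have h2 : 2 ≤ CV.card := by
      have := Finset.card_le_card hpairCV
      omega
    omega
  have hIcard : Intl.card ≤ D0.card := by
    rw [hIntl]
    exact Finset.card_le_card (Finset.erase_subset _ _)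
  have hPicard : ((H.tree i).pathVerts ℓ).card ≤ (H.tree i).height := by
    refine (RootedTree.aux_pathVerts_card _ _).trans ?_
    rw [RootedTree.height]
    have := Finset.le_sup (f := (H.tree i).depth) hℓi
    omega
  have hPjcard : ((H.tree j).pathVerts ℓ).card ≤ (H.tree j).height := by
    refine (RootedTree.aux_pathVerts_card _ _).trans ?_
    rw [RootedTree.height]
    have := Finset.le_sup (f := (H.tree j).depth) hℓj
    omega
  have hmpos : 0 < H.m := i.pos
  have hlognn : 0 ≤ Real.logb 2 (H.m : ℝ) := by
    apply Real.logb_nonneg (by norm_num)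
    exact_mod_cast hmpos
  set L : ℝ := Real.logb 2 (H.m : ℝ) / 4.9 + 3 with hLdef
  have hhi : ((H.tree i).height : ℝ) ≤ L := hH.1 i
  have hhj : ((H.tree j).height : ℝ) ≤ L := hH.1 j
  have h49 : (4.9:ℝ) = 49/10 := by norm_num
  have hL3 : (3:ℝ) ≤ L := by rw [hLdef, h49]; linarith
  have hmain : (TT.card : ℝ) ≤ 4 * L - 5 := by
    by_cases hcase : ℓ = r1 ∨ ℓ = r2
    · have hCVle : CV.card ≤ (H.tree i).height ∨ CV.card ≤ (H.tree j).height := by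
        rcases hcase with h | h
        · right
          have hPi1 : (H.tree i).pathVerts ℓ = {ℓ} := by
            rw [h, hr1, RootedTree.aux_pathVerts_root, ← hr1, ← h]
          have hCVP : CV = (H.tree j).pathVerts ℓ := by
            rw [hCVu, hPi1]
            refine Finset.union_eq_right.mpr ?_
            intro x hx
            rw [Finset.mem_singleton.mp hx]
            exact hℓP2
          rw [hCVP]
          exact hPjcard
        · left
          have hPj1 : (H.tree j).pathVerts ℓ = {ℓ} := by
            rw [h, hr2, RootedTree.aux_pathVerts_root, ← hr2, ← h]
          have hCVP : CV = (H.tree i).pathVerts ℓ := by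
            rw [hCVu, hPj1]
            refine Finset.union_eq_left.mpr ?_
            intro x hx
            rw [Finset.mem_singleton.mp hx]
            exact hℓP1
          rw [hCVP]
          exact hPicard
      have hcast : (TT.card:ℝ) + 2 ≤ 2 * (CV.card:ℝ) := by
        exact_mod_cast (by omega : TT.card + 2 ≤ 2 * CV.card)
      rcases hCVle with h | h
      · have hx : (CV.card:ℝ) ≤ L := le_trans (by exact_mod_cast h) hhi
        linarith
      · have hx : (CV.card:ℝ) ≤ L := le_trans (by exact_mod_cast h) hhj
        linarith
    · push_neg at hcase
      have hℓD0 : ℓ ∈ D0 := by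
        rw [hD0]
        exact Finset.mem_sdiff.mpr ⟨hℓCV, by simp [hcase.1, hcase.2]⟩
      have hIcard' : Intl.card + 1 = D0.card := by
        rw [hIntl, Finset.card_erase_of_mem hℓD0]
        have := Finset.card_pos.mpr ⟨ℓ, hℓD0⟩
        omega
      have hinter : 1 ≤ ((H.tree i).pathVerts ℓ ∩ (H.tree j).pathVerts ℓ).card :=
        Finset.card_pos.mpr ⟨ℓ, Finset.mem_inter.mpr ⟨hℓP1, hℓP2⟩⟩
      have hcvle : CV.card + 1
          ≤ ((H.tree i).pathVerts ℓ).card + ((H.tree j).pathVerts ℓ).card := by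
        have hu := Finset.card_union_add_card_inter
          ((H.tree i).pathVerts ℓ) ((H.tree j).pathVerts ℓ)
        rw [← hCVu] at hu
        omega
      have hN : TT.card + 5
          ≤ 2 * (((H.tree i).pathVerts ℓ).card + ((H.tree j).pathVerts ℓ).card) := by
        omega
      have hpireal : (((H.tree i).pathVerts ℓ).card : ℝ) ≤ L :=
        le_trans (by exact_mod_cast hPicard) hhi
      have hpjreal : (((H.tree j).pathVerts ℓ).card : ℝ) ≤ L :=
        le_trans (by exact_mod_cast hPjcard) hhj
      have hNr : (TT.card:ℝ) + 5 ≤ 2 * ((((H.tree i).pathVerts ℓ).card:ℝ)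
          + (((H.tree j).pathVerts ℓ).card:ℝ)) := by
        exact_mod_cast hN
      linarith
  -- final arithmetic
  have hPrlow : (3:ℝ) * 2 ^ (n - TT.card) / 2 ^ n ≤ ∑ S ∈ E', H.weight S := by
    have hstep1 : (3:ℝ) * 2 ^ (n - TT.card) ≤ (GoodF.card : ℝ) := by
      exact_mod_cast hGoodFcard
    have hwsum : ∑ S ∈ E', H.weight S = (∑ S ∈ E', (2:ℝ) ^ (H.Fix S).ncard) / 2 ^ n := by
      rw [Finset.sum_div]
      exact Finset.sum_congr rfl fun S _ => hweight S
    rw [hwsum]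
    gcongr
    exact hstep1.trans hsum
  refine le_trans ?_ hPrlow
  have hratio : (2:ℝ) ^ (n - TT.card) / 2 ^ n = ((2:ℝ) ^ TT.card)⁻¹ := by
    have hmul : (2:ℝ) ^ (n - TT.card) * 2 ^ TT.card = 2 ^ n := by
      rw [← pow_add]
      congr 1
      have hTTn : TT.card ≤ n := by
        rw [hn]
        simpa using Finset.card_le_card (Finset.subset_univ TT)
      omega
    rw [div_eq_iff (by positivity : (0:ℝ) < (2:ℝ) ^ n).ne', inv_mul_eq_div,
      eq_div_iff (by positivity : (0:ℝ) < (2:ℝ) ^ TT.card).ne']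
    exact hmul
  rw [mul_div_assoc, hratio]
  have h2t : ((2:ℝ) ^ TT.card)⁻¹ = (2:ℝ) ^ (-(TT.card : ℝ)) := by
    rw [Real.rpow_neg (by norm_num), Real.rpow_natCast]
  rw [h2t]
  have hm128 : (3:ℝ)/128 * (H.m:ℝ) ^ (-(4/4.9) : ℝ)
      = 3 * (2:ℝ) ^ (-(7:ℝ) + Real.logb 2 (H.m:ℝ) * (-(4/4.9))) := by
    rw [Real.rpow_add (by norm_num : (0:ℝ) < 2)]
    have h7 : (2:ℝ) ^ (-(7:ℝ)) = 1/128 := by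
      rw [Real.rpow_neg (by norm_num), show (7:ℝ) = ((7:ℕ):ℝ) by norm_num,
        Real.rpow_natCast]
      norm_num
    have hmr : (2:ℝ) ^ (Real.logb 2 (H.m:ℝ) * (-(4/4.9))) = (H.m:ℝ) ^ (-(4/4.9) : ℝ) := by
      rw [Real.rpow_mul (by norm_num : (0:ℝ) ≤ 2),
        Real.rpow_logb (by norm_num) (by norm_num) (by exact_mod_cast hmpos)]
    rw [h7, hmr]
    ring
  rw [hm128]
  have hexp : -(7:ℝ) + Real.logb 2 (H.m:ℝ) * (-(4/4.9)) ≤ -(TT.card : ℝ) := by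
    rw [hLdef] at hmain
    rw [h49] at hmain ⊢
    linarith
  have hmono := (Real.rpow_le_rpow_left_iff (by norm_num : (1:ℝ) < 2)).mpr hexp
  linarith
end NBPPaper
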